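/- For every propositional base K and every formula φ, if K ⊩₁ φ then K ⊩_{a1} φ. -/
import Mathlib


namespace Occ

/-- Propositional formulas over variables indexed by `ℕ`,
built from variables using negation and conjunction. -/
inductive Form : Type where
  | var : ℕ → Form
  | neg : Form → Form
  | conj : Form → Form → Form
deriving DecidableEq

/-- Boolean evaluation of a formula under an interpretation `w`. -/
def eval (w : ℕ → Bool) : Form → Bool
  | .var p => w p
  | .neg φ => !(eval w φ)
  | .conj φ ψ => eval w φ && eval w ψ

/-- The variables occurring in a formula. -/
def vars : Form → Finset ℕ
  | .var p => {p}
  | .neg φ => vars φ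
  | .conj φ ψ => vars φ ∪ vars ψ

/-- A step in a path addressing a subformula occurrence. -/
inductive Step : Type where
  | neg | left | right
deriving DecidableEq

/-- `occAt φ l pol = some (p, pol')` iff the path `l` addresses an occurrence of the
variable `p` in `φ`, and this occurrence has polarity `pol'` (`true` = positive)
when the ambient polarity of `φ` is `pol`. -/
def occAt : Form → List Step → Bool → Option (ℕ × Bool)
  | .var p, [], pol => some (p, pol)
  | .neg φ, .neg :: l, pol => occAt φ l (!pol)
  | .conj φ _, .left :: l, pol => occAt φ l pol
  | .conj _ ψ, .right :: l, pol => occAt ψ l pol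
  | _, _, _ => none

/-- A variable occurrence in a base: a formula together with a path into it. -/
abbrev Occurrence : Type := Form × List Step

/-- A propositional base: a finite set of formulas. -/
abbrev PB : Type := Finset Form

/-- `o` is a variable occurrence in the base `K`. -/
def IsOcc (K : PB) (o : Occurrence) : Prop :=
  o.1 ∈ K ∧ ∃ p pol, occAt o.1 o.2 true = some (p, pol)

/-- `o` is an occurrence of the variable `p` in `K`, of polarity `pol`. -/
def IsOccOf (K : PB) (o : Occurrence) (p : ℕ) (pol : Bool) : Prop :=
  o.1 ∈ K ∧ occAt o.1 o.2 true = some (p, pol)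

/-- `o` is an occurrence of the variable `p` in `K`. -/
def IsOccVar (K : PB) (o : Occurrence) (p : ℕ) : Prop :=
  ∃ pol, IsOccOf K o p pol

/-- `o` is a positive variable occurrence in `K`. -/
def IsPosOcc (K : PB) (o : Occurrence) : Prop := ∃ p, IsOccOf K o p true

/-- `o` is a negative variable occurrence in `K`. -/
def IsNegOcc (K : PB) (o : Occurrence) : Prop := ∃ p, IsOccOf K o p false

/-- `o` and `o'` are occurrences of the same variable. -/
def sameVar (o o' : Occurrence) : Prop :=
  ∃ p pol pol', occAt o.1 o.2 true = some (p, pol) ∧ occAt o'.1 o'.2 true = some (p, pol')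

/-- The variables occurring in a base. -/
def varsPB (K : PB) : Finset ℕ := K.sup vars

/-- `w` is a (Boolean) model of the base `K` (i.e. of the conjunction of its formulas). -/
def modelsPB (w : ℕ → Bool) (K : PB) : Prop := ∀ φ ∈ K, eval w φ = true

/-- A base is consistent iff the conjunction of its formulas has a model. -/
def ConsistentPB (K : PB) : Prop := ∃ w, modelsPB w K

/-- Classical entailment from a base. -/
def Entails (K : PB) (φ : Form) : Prop := ∀ w, modelsPB w K → eval w φ = true

/-- Rename every variable occurrence of a formula, the new variable of the
occurrence at path `l` being `f l`. -/
def renameBy : (List Step → ℕ) → Form → Form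
  | f, .var _ => .var (f [])
  | f, .neg φ => .neg (renameBy (fun l => f (.neg :: l)) φ)
  | f, .conj φ ψ =>
      .conj (renameBy (fun l => f (.left :: l)) φ) (renameBy (fun l => f (.right :: l)) ψ)

/-- The formula `φ` (viewed as a member of a base) with each occurrence `o`
replaced by the variable `R o`. -/
def renameForm (R : Occurrence → ℕ) (φ : Form) : Form :=
  renameBy (fun l => R (φ, l)) φ

/-- A C-renaming of `K`: it assigns a pairwise distinct fresh variable to each
occurrence of `K`. -/
structure IsCRenaming (K : PB) (R : Occurrence → ℕ) : Prop where
  fresh : ∀ o, IsOcc K o → R o ∉ varsPB K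
  inj : ∀ o o', IsOcc K o → IsOcc K o' → R o = R o' → o = o'

/-- Binary relations on occurrences, viewed as sets of ordered pairs. -/
abbrev Rel : Type := Set (Occurrence × Occurrence)

/-- `r` is an equivalence relation on `Occ(K)`. -/
structure IsEquivOn (K : PB) (r : Rel) : Prop where
  dom : ∀ q ∈ r, IsOcc K q.1 ∧ IsOcc K q.2
  refl : ∀ o, IsOcc K o → (o, o) ∈ r
  symm : ∀ q ∈ r, (q.2, q.1) ∈ r
  trans : ∀ a b c : Occurrence, (a, b) ∈ r → (b, c) ∈ r → (a, c) ∈ r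

/-- Compliance: related occurrences are occurrences of the same variable. -/
def Compliant (r : Rel) : Prop := ∀ q ∈ r, sameVar q.1 q.2

/-- Consistency of the formula `⋀R(K) ∧ ⋀_{(o,o')∈r} (R(o) ↔ R(o'))`. -/
def RelConsistent (K : PB) (R : Occurrence → ℕ) (r : Rel) : Prop :=
  ∃ w : ℕ → Bool, (∀ φ ∈ K, eval w (renameForm R φ) = true) ∧
    ∀ q ∈ r, w (R q.1) = w (R q.2)

/-- Minimal Inconsistency Relation of `K` (w.r.t. the C-renaming `R`). -/
def IsMIR (K : PB) (R : Occurrence → ℕ) (r : Rel) : Prop :=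
  IsEquivOn K r ∧ Compliant r ∧ ¬ RelConsistent K R r ∧
    ∀ r', IsEquivOn K r' → Compliant r' → ¬ RelConsistent K R r' → ¬ r' ⊂ r

/-- Maximal Consistency Relation of `K` (w.r.t. the C-renaming `R`). -/
def IsMCR (K : PB) (R : Occurrence → ℕ) (r : Rel) : Prop :=
  IsEquivOn K r ∧ Compliant r ∧ RelConsistent K R r ∧
    ∀ r', IsEquivOn K r' → Compliant r' → RelConsistent K R r' → ¬ r ⊂ r'

/-- The relation `∼_c^K`: relating occurrences of `K` of the same variable. -/
def sameVarRel (K : PB) : Rel :=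
  {q | IsOcc K q.1 ∧ IsOcc K q.2 ∧ sameVar q.1 q.2}

/-- `PN(r)`: related pairs consisting of a positive and a negative occurrence. -/
def PN (K : PB) (r : Rel) : Rel :=
  {q | q ∈ r ∧ IsPosOcc K q.1 ∧ IsNegOcc K q.2}

/-- A BMCR: an MCR satisfying Maximality-2. -/
def IsBMCR (K : PB) (R : Occurrence → ℕ) (r : Rel) : Prop :=
  IsMCR K R r ∧
    ∀ r', IsEquivOn K r' → Compliant r' → RelConsistent K R r' → ¬ PN K r ⊂ PN K r'

/-- `H` is a hitting set of the collection `S`. -/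
def IsHittingSet {α : Type} (S : Set (Set α)) (H : Set α) : Prop :=
  ∀ s ∈ S, (s ∩ H).Nonempty

/-- `H` is a minimal hitting set of the collection `S`. -/
def IsMinHittingSet {α : Type} (S : Set (Set α)) (H : Set α) : Prop :=
  IsHittingSet S H ∧ ∀ H', H' ⊂ H → ¬ IsHittingSet S H'

/-- `r` is `H`-maximal (for an equivalence relation `r ⊆ ∼_c^K`). -/
def IsHMaximal (K : PB) (H r : Rel) : Prop :=
  r ∩ H = ∅ ∧
    ∀ r', IsEquivOn K r' → r' ⊆ sameVarRel K → r ⊂ r' → (r' ∩ H).Nonempty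

/-- `r` is `H`-minimal (for an equivalence relation `r ⊆ ∼_c^K`). -/
def IsHMinimal (K : PB) (H r : Rel) : Prop :=
  H ⊆ r ∧ ∀ r', IsEquivOn K r' → r' ⊂ r → ¬ H ⊆ r'

/-- The set of all MIRs of `K`. -/
def MIRs (K : PB) (R : Occurrence → ℕ) : Set Rel := {r | IsMIR K R r}

/-- The set of all C-MCRs of `K`: relations `θ ⊆ ∼_c^K` with `∼_c^K ∖ θ` an MCR. -/
def CMCRs (K : PB) (R : Occurrence → ℕ) : Set Rel :=
  {θ | θ ⊆ sameVarRel K ∧ IsMCR K R (sameVarRel K \ θ)}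

/-- `ρ` is a `∼`-renaming for the equivalence relation `r` on `Occ(K)`:
it assigns a distinct variable to each equivalence class (so it is constant on
classes and distinguishes distinct classes), and any class containing all the
occurrences of a variable `p` is mapped to `p` itself. -/
def IsClassRenaming (K : PB) (r : Rel) (ρ : Occurrence → ℕ) : Prop :=
  (∀ o o', IsOcc K o → IsOcc K o' → (ρ o = ρ o' ↔ (o, o') ∈ r)) ∧
    (∀ o p, IsOccVar K o p → (∀ o', IsOccVar K o' p → (o, o') ∈ r) → ρ o = p)

/-- `σ` encodes a tuple `(q₁,…,q_m) ∈ P(ρ_∼, S)` where `S = (p₁,…,p_m)`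
enumerates `var(K) ∩ var(φ)`: it maps each shared variable `p` to a member of
`⌈ρ⌉(p)` and is the identity elsewhere. -/
def IsTupleChoice (K : PB) (φ : Form) (ρ : Occurrence → ℕ) (σ : ℕ → ℕ) : Prop :=
  (∀ p, p ∈ varsPB K → p ∈ vars φ → ∃ o, IsOccVar K o p ∧ σ p = ρ o) ∧
    (∀ p, ¬ (p ∈ varsPB K ∧ p ∈ vars φ) → σ p = p)

/-- Simultaneous substitution of variables by variables. -/
def substV (σ : ℕ → ℕ) : Form → Form
  | .var p => .var (σ p)
  | .neg φ => .neg (substV σ φ)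
  | .conj φ ψ => .conj (substV σ φ) (substV σ ψ)

/-- `ρ_∼(K) ⊢ ψ`. -/
def rhoEntails (K : PB) (ρ : Occurrence → ℕ) (ψ : Form) : Prop :=
  ∀ w : ℕ → Bool, (∀ φ ∈ K, eval w (renameForm ρ φ) = true) → eval w ψ = true

/-- The inference relation `K ⊩₁ φ`. -/
def Inf1 (K : PB) (R : Occurrence → ℕ) (φ : Form) : Prop :=
  ∀ r ρ, IsMCR K R r → IsClassRenaming K r ρ →
    ∃ σ, IsTupleChoice K φ ρ σ ∧ rhoEntails K ρ (substV σ φ)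

/-- The inference relation `K ⊩₂ φ`. -/
def Inf2 (K : PB) (R : Occurrence → ℕ) (φ : Form) : Prop :=
  ∀ r ρ, IsMCR K R r → IsClassRenaming K r ρ →
    ∀ σ, IsTupleChoice K φ ρ σ → rhoEntails K ρ (substV σ φ)

/-- The inference relation `K ⊩₁^B φ`. -/
def Inf1B (K : PB) (R : Occurrence → ℕ) (φ : Form) : Prop :=
  ∀ r ρ, IsBMCR K R r → IsClassRenaming K r ρ →
    ∃ σ, IsTupleChoice K φ ρ σ ∧ rhoEntails K ρ (substV σ φ)

/-- The inference relation `K ⊩₂^B φ`. -/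
def Inf2B (K : PB) (R : Occurrence → ℕ) (φ : Form) : Prop :=
  ∀ r ρ, IsBMCR K R r → IsClassRenaming K r ρ →
    ∀ σ, IsTupleChoice K φ ρ σ → rhoEntails K ρ (substV σ φ)

/-- `μ` is an o-model of `K`: any interpretation `w` with `w (R o) = μ o` for all
occurrences `o` of `K` is a model of `⋀R(K)`. -/
def OModel (K : PB) (R : Occurrence → ℕ) (μ : Occurrence → Bool) : Prop :=
  ∀ w : ℕ → Bool, (∀ o, IsOcc K o → w (R o) = μ o) →
    ∀ φ ∈ K, eval w (renameForm R φ) = true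

/-- `diff_a(μ)`: pairs of occurrences of the same variable on which `μ` differs. -/
def diffA (K : PB) (μ : Occurrence → Bool) : Rel :=
  {q | IsOcc K q.1 ∧ IsOcc K q.2 ∧ sameVar q.1 q.2 ∧ μ q.1 ≠ μ q.2}

/-- `μ` is an a-minimal o-model of `K`. -/
def AMinOModel (K : PB) (R : Occurrence → ℕ) (μ : Occurrence → Bool) : Prop :=
  OModel K R μ ∧ ∀ μ', OModel K R μ' → ¬ diffA K μ' ⊂ diffA K μ

/-- A Boolean interpretation `w` is compatible with an o-interpretation `μ`. -/
def Compatible (K : PB) (μ : Occurrence → Bool) (w : ℕ → Bool) : Prop :=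
  ∀ p ∈ varsPB K, ∃ o, IsOccVar K o p ∧ w p = μ o

/-- The inference relation `K ⊩_{a1} φ`. -/
def InfA1 (K : PB) (R : Occurrence → ℕ) (φ : Form) : Prop :=
  ∀ μ, AMinOModel K R μ → ∃ w, Compatible K μ w ∧ eval w φ = true

/-- The inference relation `K ⊩_{a2} φ`. -/
def InfA2 (K : PB) (R : Occurrence → ℕ) (φ : Form) : Prop :=
  ∀ μ, AMinOModel K R μ → ∀ w, Compatible K μ w → eval w φ = true

/-- LP_m evaluation: an LP_m interpretation assigns a (nonempty) set of truth
values to each variable; it extends to formulas pointwise. -/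
def lpEval (lam : ℕ → Set Bool) : Form → Set Bool
  | .var p => lam p
  | .neg φ => (fun v => !v) '' lpEval lam φ
  | .conj φ ψ => Set.image2 (· && ·) (lpEval lam φ) (lpEval lam ψ)

/-- `lam` is an LP_m interpretation: each variable gets a nonempty set of values. -/
def IsLPInterp (lam : ℕ → Set Bool) : Prop := ∀ p, (lam p).Nonempty

/-- `lam` is an LP_m model of `⋀K`. -/
def LPModelPB (lam : ℕ → Set Bool) (K : PB) : Prop := ∀ φ ∈ K, true ∈ lpEval lam φ

/-- `λ! = {p : λ(p) = {0,1}}`. -/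
def lpBang (lam : ℕ → Set Bool) : Set ℕ := {p | lam p = Set.univ}

/-- `lam` is a minimal LP_m model of `⋀K`. -/
def MinLPModelPB (K : PB) (lam : ℕ → Set Bool) : Prop :=
  IsLPInterp lam ∧ LPModelPB lam K ∧
    ∀ lam', IsLPInterp lam' → LPModelPB lam' K → ¬ lpBang lam' ⊂ lpBang lam

/-- `K ⊢_{LPm} φ`. -/
def LPmEntails (K : PB) (φ : Form) : Prop :=
  ∀ lam, MinLPModelPB K lam → true ∈ lpEval lam φ

/-- Replace the subformula occurrence of `φ` addressed by the path `l` by `ψ`. -/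
def replaceAt : Form → List Step → Form → Form
  | _, [], ψ => ψ
  | .neg φ, .neg :: l, ψ => .neg (replaceAt φ l ψ)
  | .conj φ χ, .left :: l, ψ => .conj (replaceAt φ l ψ) χ
  | .conj φ χ, .right :: l, ψ => .conj φ (replaceAt χ l ψ)
  | φ, _, _ => φ

/-- The equivalence relation `∼_λ` induced on `Occ(K)` by an LP_m interpretation:
its classes are `Occ(p,K)` for `|λ(p)| = 1` and `PosOcc(p,K)`, `NegOcc(p,K)` for
`λ(p) = {0,1}`. -/
def lamRel (K : PB) (lam : ℕ → Set Bool) : Rel :=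
  {q | ∃ p pol pol', IsOccOf K q.1 p pol ∧ IsOccOf K q.2 p pol' ∧
    (lam p = Set.univ → pol = pol')}

open scoped Classical in
/-- The o-interpretation `μ_λ^K` associated with an LP_m interpretation `λ`. -/
noncomputable def muOf (lam : ℕ → Set Bool) (o : Occurrence) : Bool :=
  match occAt o.1 o.2 true with
  | some (p, pol) =>
      if lam p = ({false} : Set Bool) then false
      else if lam p = ({true} : Set Bool) then true
      else pol
  | none => false

end Occ
namespace Occ

open Classical

/-! ### Structural lemmas -/

lemma mem_vars_of_occAt : ∀ (ψ : Form) (l : List Step) (pol : Bool) (p : ℕ) (pol' : Bool),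
    occAt ψ l pol = some (p, pol') → p ∈ vars ψ := by
  intro ψ
  induction ψ with
  | var q => intro l pol p pol' h
             cases l with
             | nil => simp [occAt] at h; simp [vars, h.1]
             | cons s l => cases s <;> simp [occAt] at h
  | neg ψ ih => intro l pol p pol' h
                cases l with
                | nil => simp [occAt] at h
                | cons s l => cases s <;> simp [occAt] at h
                              exact ih _ _ _ _ h
  | conj ψ χ ih ih2 =>
      intro l pol p pol' h
      cases l with
      | nil => simp [occAt] at h
      | cons s l =>
          cases s <;> simp [occAt, vars] at h ⊢
          · exact Or.inl (ih _ _ _ _ h)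
          · exact Or.inr (ih2 _ _ _ _ h)

lemma exists_occAt_of_mem_vars : ∀ (ψ : Form) (p : ℕ), p ∈ vars ψ → ∀ pol,
    ∃ l pol', occAt ψ l pol = some (p, pol') := by
  intro ψ
  induction ψ with
  | var q => intro p hp pol
             simp [vars] at hp
             exact ⟨[], pol, by simp [occAt, hp]⟩
  | neg ψ ih => intro p hp pol
                obtain ⟨l, pol', hl⟩ := ih p hp (!pol)
                exact ⟨.neg :: l, pol', hl⟩
  | conj ψ χ ih ih2 =>
      intro p hp pol
      simp [vars] at hp
      rcases hp with hp | hp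
      · obtain ⟨l, pol', hl⟩ := ih p hp pol
        exact ⟨.left :: l, pol', hl⟩
      · obtain ⟨l, pol', hl⟩ := ih2 p hp pol
        exact ⟨.right :: l, pol', hl⟩

lemma eval_substV (σ : ℕ → ℕ) (w : ℕ → Bool) : ∀ φ, eval w (substV σ φ) = eval (fun p => w (σ p)) φ := by
  intro φ
  induction φ with
  | var p => rfl
  | neg φ ih => simp [substV, eval, ih]
  | conj φ ψ ih ih2 => simp [substV, eval, ih, ih2]

lemma eval_renameBy_congr : ∀ (ψ : Form) (pol : Bool) (f g : List Step → ℕ) (w w' : ℕ → Bool),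
    (∀ l p pol', occAt ψ l pol = some (p, pol') → w (f l) = w' (g l)) →
    eval w (renameBy f ψ) = eval w' (renameBy g ψ) := by
  intro ψ
  induction ψ with
  | var q => intro pol f g w w' h
             exact h [] q pol (by simp [occAt])
  | neg ψ ih =>
      intro pol f g w w' h
      simp only [renameBy, eval]
      rw [ih (!pol) _ _ w w' (fun l p pol' hl => h (.neg :: l) p pol' hl)]
  | conj ψ χ ih ih2 =>
      intro pol f g w w' h
      simp only [renameBy, eval]
      rw [ih pol _ _ w w' (fun l p pol' hl => h (.left :: l) p pol' hl),
          ih2 pol _ _ w w' (fun l p pol' hl => h (.right :: l) p pol' hl)]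

lemma eval_renameForm_congr (ψ : Form) (f g : Occurrence → ℕ) (w w' : ℕ → Bool)
    (h : ∀ l p pol', occAt ψ l true = some (p, pol') → w (f (ψ, l)) = w' (g (ψ, l))) :
    eval w (renameForm f ψ) = eval w' (renameForm g ψ) :=
  eval_renameBy_congr ψ true _ _ w w' h

end Occ
namespace Occ

/-! ### An injective encoding of occurrences into `ℕ` -/

def encF : Form → ℕ
  | .var p => Nat.pair 0 p
  | .neg φ => Nat.pair 1 (encF φ)
  | .conj φ ψ => Nat.pair 2 (Nat.pair (encF φ) (encF ψ))

lemma encF_inj : ∀ φ ψ, encF φ = encF ψ → φ = ψ := by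
  intro φ
  induction φ with
  | var p => intro ψ h; cases ψ <;> simp [encF, Nat.pair_eq_pair] at h; simp [h]
  | neg φ ih => intro ψ h; cases ψ <;> simp [encF, Nat.pair_eq_pair] at h
                rw [ih _ h]
  | conj φ χ ih ih2 =>
      intro ψ h; cases ψ <;> simp [encF, Nat.pair_eq_pair] at h
      rw [ih _ h.1, ih2 _ h.2]

def encS : Step → ℕ
  | .neg => 0
  | .left => 1
  | .right => 2

def encL : List Step → ℕ
  | [] => 0
  | s :: l => Nat.pair (encS s) (encL l) + 1

lemma encL_inj : ∀ l l' : List Step, encL l = encL l' → l = l' := by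
  intro l
  induction l with
  | nil => intro l' h; cases l' <;> simp [encL] at h ⊢
  | cons s l ih =>
      intro l' h; cases l' with
      | nil => simp [encL] at h
      | cons s' l' =>
          simp [encL, Nat.pair_eq_pair] at h
          obtain ⟨h1, h2⟩ := h
          have : s = s' := by cases s <;> cases s' <;> simp [encS] at h1 ⊢
          rw [this, ih _ h2]

def encO (o : Occurrence) : ℕ := Nat.pair (encF o.1) (encL o.2)

lemma encO_inj : Function.Injective encO := by
  rintro ⟨φ, l⟩ ⟨ψ, l'⟩ h
  simp [encO, Nat.pair_eq_pair] at h
  exact Prod.ext (encF_inj _ _ h.1) (encL_inj _ _ h.2)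

/-! ### The variable of an occurrence -/

def varOf (o : Occurrence) : ℕ :=
  match occAt o.1 o.2 true with
  | some (p, _) => p
  | none => 0

lemma varOf_eq {K : PB} {o : Occurrence} {p : ℕ} (h : IsOccVar K o p) : varOf o = p := by
  obtain ⟨pol, _, h2⟩ := h
  simp [varOf, h2]

lemma isOccVar_varOf {K : PB} {o : Occurrence} (h : IsOcc K o) : IsOccVar K o (varOf o) := by
  obtain ⟨h1, p, pol, h2⟩ := h
  exact ⟨pol, h1, by simp [varOf, h2]⟩

lemma isOcc_of_isOccVar {K : PB} {o : Occurrence} {p : ℕ} (h : IsOccVar K o p) : IsOcc K o := by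
  obtain ⟨pol, h1, h2⟩ := h
  exact ⟨h1, p, pol, h2⟩

lemma sameVar_iff_varOf {K : PB} {o o' : Occurrence} (h : IsOcc K o) (h' : IsOcc K o') :
    sameVar o o' ↔ varOf o = varOf o' := by
  obtain ⟨_, p, pol, h2⟩ := h
  obtain ⟨_, p', pol', h2'⟩ := h'
  constructor
  · rintro ⟨q, a, b, ha, hb⟩
    rw [h2] at ha; rw [h2'] at hb
    simp at ha hb
    simp [varOf, h2, h2', ha.1, hb.1]
  · intro hv
    simp [varOf, h2, h2'] at hv
    exact ⟨p, pol, pol', h2, by rw [hv]; exact h2'⟩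

lemma varOf_mem_varsPB {K : PB} {o : Occurrence} (h : IsOcc K o) : varOf o ∈ varsPB K := by
  obtain ⟨h1, p, pol, h2⟩ := h
  have : p ∈ vars o.1 := mem_vars_of_occAt _ _ _ _ _ h2
  have hp : varOf o = p := by simp [varOf, h2]
  rw [hp]
  exact Finset.mem_sup.2 ⟨o.1, h1, this⟩

lemma exists_occVar_of_mem_varsPB {K : PB} {p : ℕ} (h : p ∈ varsPB K) :
    ∃ o, IsOccVar K o p := by
  obtain ⟨ψ, hψ, hp⟩ := Finset.mem_sup.1 h
  obtain ⟨l, pol', hl⟩ := exists_occAt_of_mem_vars ψ p hp true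
  exact ⟨(ψ, l), pol', hψ, hl⟩

end Occ
namespace Occ

/-! ### The agreement relation of an o-interpretation -/

def agreeRel (K : PB) (μ : Occurrence → Bool) : Rel :=
  {q | IsOcc K q.1 ∧ IsOcc K q.2 ∧ sameVar q.1 q.2 ∧ μ q.1 = μ q.2}

lemma agreeRel_equiv (K : PB) (μ : Occurrence → Bool) : IsEquivOn K (agreeRel K μ) := by
  constructor
  · rintro q ⟨h1, h2, _, _⟩; exact ⟨h1, h2⟩
  · intro o ho
    refine ⟨ho, ho, ?_, rfl⟩
    rw [sameVar_iff_varOf ho ho]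
  · rintro q ⟨h1, h2, h3, h4⟩
    refine ⟨h2, h1, ?_, h4.symm⟩
    rw [sameVar_iff_varOf h2 h1]
    rw [sameVar_iff_varOf h1 h2] at h3
    exact h3.symm
  · rintro a b c ⟨ha, hb, hab, hab'⟩ ⟨_, hc, hbc, hbc'⟩
    refine ⟨ha, hc, ?_, hab'.trans hbc'⟩
    rw [sameVar_iff_varOf ha hc]
    rw [sameVar_iff_varOf ha hb] at hab
    rw [sameVar_iff_varOf hb hc] at hbc
    exact hab.trans hbc

lemma agreeRel_compliant (K : PB) (μ : Occurrence → Bool) : Compliant (agreeRel K μ) :=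
  fun _ hq => hq.2.2.1

lemma diffA_eq (K : PB) (μ : Occurrence → Bool) :
    diffA K μ = sameVarRel K \ agreeRel K μ := by
  ext q
  constructor
  · rintro ⟨h1, h2, h3, h4⟩
    exact ⟨⟨h1, h2, h3⟩, fun h => h4 h.2.2.2⟩
  · rintro ⟨⟨h1, h2, h3⟩, h4⟩
    exact ⟨h1, h2, h3, fun he => h4 ⟨h1, h2, h3, he⟩⟩

open Classical in
noncomputable def wOf (K : PB) (R : Occurrence → ℕ) (μ : Occurrence → Bool) (n : ℕ) : Bool :=
  if h : ∃ o, IsOcc K o ∧ R o = n then μ h.choose else false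

lemma wOf_spec {K : PB} {R : Occurrence → ℕ} (hR : IsCRenaming K R)
    (μ : Occurrence → Bool) {o : Occurrence} (ho : IsOcc K o) :
    wOf K R μ (R o) = μ o := by
  have h : ∃ o', IsOcc K o' ∧ R o' = R o := ⟨o, ho, rfl⟩
  rw [wOf]
  rw [dif_pos h]
  have hc := h.choose_spec
  rw [hR.inj _ _ hc.1 ho hc.2]

lemma agreeRel_MCR {K : PB} {R : Occurrence → ℕ} (hR : IsCRenaming K R)
    {μ : Occurrence → Bool} (hμ : AMinOModel K R μ) : IsMCR K R (agreeRel K μ) := by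
  obtain ⟨hom, hmin⟩ := hμ
  refine ⟨agreeRel_equiv K μ, agreeRel_compliant K μ, ?_, ?_⟩
  · refine ⟨wOf K R μ, ?_, ?_⟩
    · exact hom _ (fun o ho => wOf_spec hR μ ho)
    · rintro q ⟨h1, h2, _, h4⟩
      rw [wOf_spec hR μ h1, wOf_spec hR μ h2, h4]
  · rintro r' he' hc' ⟨w'', hw1, hw2⟩ hsub
    set μ' : Occurrence → Bool := fun o => w'' (R o) with hμ'
    have hom' : OModel K R μ' := by
      intro w3 hw3 ψ hψ
      have : eval w3 (renameForm R ψ) = eval w'' (renameForm R ψ) := by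
        apply eval_renameForm_congr
        intro l p pol' hl
        exact hw3 (ψ, l) ⟨hψ, p, pol', hl⟩
      rw [this]; exact hw1 ψ hψ
    apply hmin μ' hom'
    rw [diffA_eq, diffA_eq]
    have hsub1 : sameVarRel K \ agreeRel K μ' ⊆ sameVarRel K \ agreeRel K μ := by
      rintro q ⟨hq1, hq2⟩
      refine ⟨hq1, fun hq3 => hq2 ?_⟩
      have : q ∈ r' := hsub.1 hq3
      exact ⟨hq1.1, hq1.2.1, hq1.2.2, hw2 q this⟩
    refine ⟨hsub1, ?_⟩
    obtain ⟨q, hqr', hqa⟩ := Set.not_subset.1 (fun hc => hsub.2 hc)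
    intro hcon
    have hq1 : q ∈ sameVarRel K := by
      obtain ⟨d1, d2⟩ := he'.dom q hqr'
      exact ⟨d1, d2, hc' q hqr'⟩
    have hqd : q ∈ sameVarRel K \ agreeRel K μ := ⟨hq1, hqa⟩
    have := hcon hqd
    exact this.2 ⟨hq1.1, hq1.2.1, hq1.2.2, hw2 q hqr'⟩

end Occ
namespace Occ

/-! ### A canonical class renaming -/

def classOf (r : Rel) (o : Occurrence) : Set Occurrence := {o' | (o, o') ∈ r}

def Mbound (K : PB) : ℕ := (varsPB K).sup id + 1

lemma lt_Mbound {K : PB} {p : ℕ} (hp : p ∈ varsPB K) : p < Mbound K :=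
  Nat.lt_succ_of_le (Finset.le_sup (f := id) hp)

def Full (K : PB) (r : Rel) (o : Occurrence) : Prop :=
  ∀ o', IsOccVar K o' (varOf o) → (o, o') ∈ r

open Classical in
noncomputable def rhoOf (K : PB) (r : Rel) (o : Occurrence) : ℕ :=
  if IsOcc K o ∧ Full K r o then varOf o else Mbound K + sInf (encO '' classOf r o)

variable {K : PB} {r : Rel}

lemma varOf_eq_of_rel (he : IsEquivOn K r) (hc : Compliant r) {o o' : Occurrence}
    (h : (o, o') ∈ r) : varOf o = varOf o' := by
  obtain ⟨d1, d2⟩ := he.dom _ h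
  exact (sameVar_iff_varOf d1 d2).1 (hc _ h)

lemma classOf_eq_of_rel (he : IsEquivOn K r) {o o' : Occurrence}
    (h : (o, o') ∈ r) : classOf r o = classOf r o' := by
  ext z
  constructor
  · intro hz; exact he.trans _ _ _ (he.symm _ h) hz
  · intro hz; exact he.trans _ _ _ h hz

lemma full_iff_of_rel (he : IsEquivOn K r) (hc : Compliant r) {o o' : Occurrence}
    (h : (o, o') ∈ r) : Full K r o ↔ Full K r o' := by
  have hv := varOf_eq_of_rel he hc h
  constructor
  · intro hf o'' ho''
    exact he.trans _ _ _ (he.symm _ h) (hf o'' (hv ▸ ho''))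
  · intro hf o'' ho''
    exact he.trans _ _ _ h (hf o'' (hv ▸ ho''))

lemma rhoOf_isClassRenaming (he : IsEquivOn K r) (hc : Compliant r) :
    IsClassRenaming K r (rhoOf K r) := by
  constructor
  · intro o o' ho ho'
    constructor
    · intro heq
      by_cases hf : IsOcc K o ∧ Full K r o <;> by_cases hf' : IsOcc K o' ∧ Full K r o' <;>
        rw [rhoOf, rhoOf] at heq
      · rw [if_pos hf, if_pos hf'] at heq
        exact hf.2 o' (heq ▸ isOccVar_varOf ho')
      · rw [if_pos hf, if_neg hf'] at heq
        have := lt_Mbound (varOf_mem_varsPB ho)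
        omega
      · rw [if_neg hf, if_pos hf'] at heq
        have := lt_Mbound (varOf_mem_varsPB ho')
        omega
      · rw [if_neg hf, if_neg hf'] at heq
        have heq' : sInf (encO '' classOf r o) = sInf (encO '' classOf r o') := by omega
        have hne : (encO '' classOf r o).Nonempty := ⟨encO o, o, he.refl o ho, rfl⟩
        have hne' : (encO '' classOf r o').Nonempty := ⟨encO o', o', he.refl o' ho', rfl⟩
        obtain ⟨x, hx, hxe⟩ := Nat.sInf_mem hne
        obtain ⟨y, hy, hye⟩ := Nat.sInf_mem hne'
        have : x = y := encO_inj (by rw [hxe, hye, heq'])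
        subst this
        exact he.trans _ _ _ hx (he.symm _ hy)
    · intro hrel
      have hv := varOf_eq_of_rel he hc hrel
      have hcl := classOf_eq_of_rel he hrel
      have hfl := full_iff_of_rel he hc hrel
      rw [rhoOf, rhoOf, hv, hcl]
      by_cases hf : Full K r o
      · rw [if_pos ⟨ho, hf⟩, if_pos ⟨ho', hfl.1 hf⟩]
      · rw [if_neg (fun hh => hf hh.2), if_neg (fun hh => hf (hfl.2 hh.2))]
  · intro o p hov hall
    have ho := isOcc_of_isOccVar hov
    have hv := varOf_eq hov
    have hfull : Full K r o := fun o' ho' => hall o' (hv ▸ ho')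
    rw [rhoOf, if_pos ⟨ho, hfull⟩, hv]

end Occ
/-- Proposition 14: `K ⊩₁ φ` implies `K ⊩_{a1} φ`. -/
theorem inf1_implies_infA1 (K : Occ.PB)
    (R : Occ.Occurrence → ℕ) (hR : Occ.IsCRenaming K R)
    (φ : Occ.Form) (h : Occ.Inf1 K R φ) :
    Occ.InfA1 K R φ := by
  classical
  intro μ hμ
  set r := Occ.agreeRel K μ with hr
  have he := Occ.agreeRel_equiv K μ
  have hcp := Occ.agreeRel_compliant K μ
  have hMCR := Occ.agreeRel_MCR hR hμ
  set ρ := Occ.rhoOf K r with hρdef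
  have hρ := Occ.rhoOf_isClassRenaming he hcp
  obtain ⟨σ, hσ, hent⟩ := h r ρ hMCR hρ
  set w : ℕ → Bool := fun n =>
    if h1 : ∃ o, Occ.IsOcc K o ∧ ρ o = n then μ h1.choose
    else if h2 : ∃ o, Occ.IsOccVar K o n then μ h2.choose else false with hw
  have key : ∀ o, Occ.IsOcc K o → w (ρ o) = μ o := by
    intro o ho
    have h1 : ∃ o', Occ.IsOcc K o' ∧ ρ o' = ρ o := ⟨o, ho, rfl⟩
    rw [hw]
    simp only
    rw [dif_pos h1]
    have hc := h1.choose_spec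
    have hrel : (h1.choose, o) ∈ r := (hρ.1 _ _ hc.1 ho).1 hc.2
    exact hrel.2.2.2
  have hKmod : ∀ ψ ∈ K, Occ.eval w (Occ.renameForm ρ ψ) = true := by
    intro ψ hψ
    have hcongr : Occ.eval w (Occ.renameForm ρ ψ)
        = Occ.eval (Occ.wOf K R μ) (Occ.renameForm R ψ) := by
      apply Occ.eval_renameForm_congr
      intro l p pol' hl
      have ho : Occ.IsOcc K (ψ, l) := ⟨hψ, p, pol', hl⟩
      rw [key _ ho, Occ.wOf_spec hR μ ho]
    rw [hcongr]
    exact hμ.1 _ (fun o ho => Occ.wOf_spec hR μ ho) ψ hψ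
  have heval := hent w hKmod
  rw [Occ.eval_substV] at heval
  refine ⟨fun p => w (σ p), ?_, heval⟩
  intro p hp
  by_cases hpφ : p ∈ Occ.vars φ
  · obtain ⟨o, hov, hσp⟩ := hσ.1 p hp hpφ
    refine ⟨o, hov, ?_⟩
    show w (σ p) = μ o
    rw [hσp, key _ (Occ.isOcc_of_isOccVar hov)]
  · have hσp : σ p = p := hσ.2 p (fun hcontra => hpφ hcontra.2)
    show ∃ o, Occ.IsOccVar K o p ∧ w (σ p) = μ o
    rw [hσp]
    by_cases h1 : ∃ o, Occ.IsOcc K o ∧ ρ o = p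
    · have h1' := h1
      obtain ⟨c, hc1, hc2⟩ := h1'
      have hc2' : Occ.rhoOf K r c = p := hc2
      have hfull : Occ.IsOcc K c ∧ Occ.Full K r c := by
        by_contra hnot
        have hval : Occ.rhoOf K r c
            = Occ.Mbound K + sInf (Occ.encO '' Occ.classOf r c) := by
          rw [Occ.rhoOf, if_neg hnot]
        have hlt := Occ.lt_Mbound hp
        omega
      have hvar : Occ.varOf c = p := by
        have hval : Occ.rhoOf K r c = Occ.varOf c := by
          rw [Occ.rhoOf, if_pos hfull]
        rw [← hval, hc2']
      refine ⟨c, hvar ▸ Occ.isOccVar_varOf hc1, ?_⟩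
      show w p = μ c
      rw [hw]
      simp only
      rw [dif_pos h1]
      have hcs := h1.choose_spec
      have hrel : (h1.choose, c) ∈ r := (hρ.1 _ _ hcs.1 hc1).1 (hcs.2.trans hc2.symm)
      exact hrel.2.2.2
    · have h2 : ∃ o, Occ.IsOccVar K o p := Occ.exists_occVar_of_mem_varsPB hp
      refine ⟨h2.choose, h2.choose_spec, ?_⟩
      show w p = μ h2.choose
      rw [hw]
      simp only
      rw [dif_neg h1, dif_pos h2]
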